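/- Let L ≥ 1, x̄ > 0, u > 0, u_n > 0, c̄ : {1,…,L+1} → (0,1], and δ > 0. Consider two allocations: x¹ with x¹_l = x̄ for l ≤ L and x¹_{L+1} = x̂, and x² with x²_l = x̄ for l ≤ L−1, x²_L = x̄ − δ·c̄_L, x²_{L+1} = x̂ + δ·c̄_{L+1}, where 0 ≤ x̂ and x̂ + δ·c̄_{L+1} ≤ x̄ and δ·c̄_L ≤ x̄. With utilities U_l(x) = u·min(x, x̄) for l ≤ L and U_{L+1}(x) = u_n·min(x, x̄), if u_n·c̄_{L+1} < u·min_{l ∈ {1,…,L+1}} c̄_l, then Σ_{l=1}^{L+1} U_l(x¹_l) − Σ_{l=1}^{L+1} U_l(x²_l) ≥ δ·(u·min_l c̄_l − u_n·c̄_{L+1}) > 0. -/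
import Mathlib


/-- Exchange-argument computation in Theorem 1: shifting probability mass δ from a
schedule serving existing link L to one serving the new link L+1 strictly decreases
total utility under the condition u_n·cbar_{L+1} < u·min_l cbar_l. -/
theorem stmt9 (L : ℕ) (hL : 1 ≤ L) (xbar u un δ xhat : ℝ)
    (hxbar : 0 < xbar) (hu : 0 < u) (hun : 0 < un) (hδ : 0 < δ)
    (cbar : Fin (L + 1) → ℝ) (hc : ∀ l, cbar l ∈ Set.Ioc (0 : ℝ) 1)
    (hxhat0 : 0 ≤ xhat)
    (hfeas1 : xhat + δ * cbar (Fin.last L) ≤ xbar)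
    (hfeas2 : δ * cbar ⟨L - 1, by omega⟩ ≤ xbar)
    (x1 x2 : Fin (L + 1) → ℝ)
    (hx1 : ∀ l : Fin (L + 1), l.val < L → x1 l = xbar)
    (hx1n : x1 (Fin.last L) = xhat)
    (hx2 : ∀ l : Fin (L + 1), l.val < L - 1 → x2 l = xbar)
    (hx2L : x2 ⟨L - 1, by omega⟩ = xbar - δ * cbar ⟨L - 1, by omega⟩)
    (hx2n : x2 (Fin.last L) = xhat + δ * cbar (Fin.last L))
    (U : Fin (L + 1) → ℝ → ℝ)
    (hU : ∀ l : Fin (L + 1), l.val < L → ∀ x, U l x = u * min x xbar)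
    (hUn : ∀ x, U (Fin.last L) x = un * min x xbar)
    (hcond : un * cbar (Fin.last L) <
      u * Finset.univ.inf' (Finset.univ_nonempty_iff.mpr ⟨⟨0, by omega⟩⟩) cbar) :
    ∑ l, U l (x1 l) - ∑ l, U l (x2 l) ≥
      δ * (u * Finset.univ.inf' (Finset.univ_nonempty_iff.mpr ⟨⟨0, by omega⟩⟩) cbar
        - un * cbar (Fin.last L)) ∧
    0 < δ * (u * Finset.univ.inf' (Finset.univ_nonempty_iff.mpr ⟨⟨0, by omega⟩⟩) cbar
        - un * cbar (Fin.last L)) := by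
  set m := Finset.univ.inf' (Finset.univ_nonempty_iff.mpr ⟨⟨0, by omega⟩⟩) cbar with hm
  have hpos : 0 < δ * (u * m - un * cbar (Fin.last L)) :=
    mul_pos hδ (by linarith)
  refine ⟨?_, hpos⟩
  have hL1 : (⟨L - 1, by omega⟩ : Fin (L + 1)) ≠ Fin.last L := by
    simp [Fin.ext_iff, Fin.last]; omega
  have hcL : 0 < cbar (⟨L - 1, by omega⟩ : Fin (L + 1)) := (hc _).1
  have hcN : 0 < cbar (Fin.last L) := (hc _).1
  have key : ∀ l : Fin (L + 1),
      U l (x1 l) - U l (x2 l) =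
      (if l = (⟨L - 1, by omega⟩ : Fin (L + 1)) then δ * (u * cbar ⟨L - 1, by omega⟩) else 0)
      + (if l = Fin.last L then -(δ * (un * cbar (Fin.last L))) else 0) := by
    intro l
    rcases lt_trichotomy l.val (L - 1) with h | h | h
    · have hlt : l.val < L := by omega
      have h1 : l ≠ (⟨L - 1, by omega⟩ : Fin (L + 1)) := by simp [Fin.ext_iff]; omega
      have h2 : l ≠ Fin.last L := by simp [Fin.ext_iff, Fin.last]; omega
      rw [hx1 l hlt, hx2 l h, if_neg h1, if_neg h2]
      ring
    · have hlval : l = (⟨L - 1, by omega⟩ : Fin (L + 1)) := by simp [Fin.ext_iff]; omega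
      rw [hlval, hx1 _ (by omega), hx2L, hU _ (by omega), hU _ (by omega), if_pos rfl, if_neg hL1]
      rw [min_self, min_eq_left (by nlinarith)]
      ring
    · have hlval : l = Fin.last L := by
        simp only [Fin.ext_iff, Fin.last]
        have := l.isLt; omega
      subst hlval
      rw [hx1n, hx2n, hUn, hUn, if_neg (Ne.symm hL1), if_pos rfl]
      rw [min_eq_left (by nlinarith), min_eq_left hfeas1]
      ring
  rw [← Finset.sum_sub_distrib]
  simp only [key]
  rw [Finset.sum_add_distrib, Finset.sum_ite_eq' Finset.univ, Finset.sum_ite_eq' Finset.univ]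
  simp only [Finset.mem_univ, if_pos]
  have hmle : m ≤ cbar (⟨L - 1, by omega⟩ : Fin (L + 1)) := Finset.inf'_le _ (Finset.mem_univ _)
  nlinarith [mul_le_mul_of_nonneg_left hmle hu.le]
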